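/- Let i ≥ 1 and let J ⊆ 𝔖 be an ideal containing u^s and p^N for some s, N ∈ ℕ, and satisfying E^{i−1}·J ⊆ Ideal.map φ J (the ideal of 𝔖 generated by φ(J)). If e·(i−1) < p−1, then J = 𝔖. (This is the annihilator-ideal core of Theorem 'control of u-torsion' part (1): applied to the annihilator of the u^∞-torsion of i-th mod p^n prismatic cohomology it yields the vanishing of that torsion.) -/

import Mathlib

theorem stmt5 (p : ℕ) [Fact p.Prime] (k : Type*) [Field k] [CharP k p] [PerfectField k]
    (φ : PowerSeries (WittVector p k) →+* PowerSeries (WittVector p k))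
    (hφu : φ PowerSeries.X = PowerSeries.X ^ p)
    (hφC : ∀ a : WittVector p k,
      φ (PowerSeries.C (R := WittVector p k) a) = PowerSeries.C (R := WittVector p k) (WittVector.frobenius a))
    (e : ℕ) (he : 1 ≤ e) (a : ℕ → WittVector p k)
    (E : PowerSeries (WittVector p k))
    (hE : E = PowerSeries.X ^ e +
      ∑ j ∈ Finset.range e, PowerSeries.C (R := WittVector p k) (a j) * PowerSeries.X ^ j)
    (haDvd : ∀ j < e, (p : WittVector p k) ∣ a j)
    (ha0 : ¬ ((p : WittVector p k) ^ 2 ∣ a 0))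
    (i : ℕ) (hi : 1 ≤ i)
    (J : Ideal (PowerSeries (WittVector p k)))
    (s N : ℕ)
    (hus : (PowerSeries.X : PowerSeries (WittVector p k)) ^ s ∈ J)
    (hpN : ((p : PowerSeries (WittVector p k)) ^ N) ∈ J)
    (hJ : ∀ x ∈ J, E ^ (i - 1) * x ∈ Ideal.map φ J)
    (hrange : e * (i - 1) < p - 1) :
    J = ⊤ := by
  classical
  -- the residue map W(k) → k
  set g : WittVector p k →+* k := WittVector.ghostComponent 0 with hgdef
  have hg : ∀ x : WittVector p k, g x = x.coeff 0 := by
    intro x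
    simp [hgdef, WittVector.ghostComponent_apply, wittPolynomial_zero]
  have hgsurj : Function.Surjective g := by
    intro c
    exact ⟨WittVector.teichmuller p c, by rw [hg]; exact WittVector.teichmuller_coeff_zero p c⟩
  have hgp : (g (p : WittVector p k)) = 0 := by
    rw [map_natCast]; exact CharP.cast_eq_zero k p
  have hgpmul : ∀ x : WittVector p k, (p : WittVector p k) ∣ x → g x = 0 := by
    rintro x ⟨b, rfl⟩
    rw [map_mul, hgp, zero_mul]
  have hker : ∀ x : WittVector p k, g x = 0 → (p : WittVector p k) ∣ x := by
    intro x hx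
    by_cases hx0 : x = 0
    · simp [hx0]
    obtain ⟨m, b, hb0, rfl⟩ := WittVector.exists_eq_pow_p_mul x hx0
    rcases Nat.eq_zero_or_pos m with hm | hm
    · exfalso
      rw [hm, pow_zero, one_mul, hg] at hx
      exact hb0 hx
    · exact Dvd.dvd.mul_right (dvd_pow_self _ hm.ne') b
  -- the reduction map 𝔖 → k⟦u⟧
  set π : PowerSeries (WittVector p k) →+* PowerSeries k := PowerSeries.map g with hπdef
  have hπsurj : Function.Surjective π := by
    intro f
    refine ⟨PowerSeries.mk fun n => (hgsurj (PowerSeries.coeff n f)).choose, ?_⟩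
    ext n
    simp only [hπdef, PowerSeries.coeff_map, PowerSeries.coeff_mk]
    exact (hgsurj (PowerSeries.coeff n f)).choose_spec
  have hπX : π PowerSeries.X = PowerSeries.X := by
    rw [hπdef]; exact PowerSeries.map_X g
  have hπker : ∀ f, π f = 0 → ∃ G, f = (p : PowerSeries (WittVector p k)) * G := by
    intro f hf
    have hdvd : ∀ n, (p : WittVector p k) ∣ PowerSeries.coeff n f := by
      intro n
      apply hker
      have := congrArg (PowerSeries.coeff n) hf
      simpa [hπdef] using this
    refine ⟨PowerSeries.mk fun n => (hdvd n).choose, PowerSeries.ext fun n => ?_⟩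
    have hp : ((p : PowerSeries (WittVector p k))) = PowerSeries.C (p : WittVector p k) := by
      simp
    rw [hp, PowerSeries.coeff_C_mul, PowerSeries.coeff_mk]
    exact (hdvd n).choose_spec
  have hπp : π (p : PowerSeries (WittVector p k)) = 0 := by
    rw [map_natCast, ← map_natCast (PowerSeries.C (R := k)) p, CharP.cast_eq_zero k p, map_zero]
  -- π E = X ^ e
  have hπE : π E = PowerSeries.X ^ e := by
    rw [hE, map_add, map_pow, hπX, map_sum]
    have : ∀ j ∈ Finset.range e,
        π (PowerSeries.C (R := WittVector p k) (a j) * PowerSeries.X ^ j) = 0 := by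
      intro j hj
      rw [map_mul, PowerSeries.map_C]
      rw [hgpmul (a j) (haDvd j (Finset.mem_range.mp hj))]
      simp
    rw [Finset.sum_congr rfl this]
    simp
  by_contra hJtop
  set I : Ideal (PowerSeries k) := J.map π with hIdef
  have hXsI : (PowerSeries.X : PowerSeries k) ^ s ∈ I := by
    have := Ideal.mem_map_of_mem π hus
    rwa [map_pow, hπX] at this
  have hIbot : I ≠ ⊥ := by
    intro h
    rw [h, Ideal.mem_bot] at hXsI
    exact pow_ne_zero s PowerSeries.X_ne_zero hXsI
  have hItop : I ≠ ⊤ := by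
    intro h
    have h1 : (1 : PowerSeries k) ∈ I := h ▸ Submodule.mem_top
    obtain ⟨y, hyJ, hy1⟩ := Ideal.mem_image_of_mem_map_of_surjective π hπsurj h1
    have hyu : IsUnit y := by
      rw [PowerSeries.isUnit_iff_constantCoeff]
      apply WittVector.isUnit_of_coeff_zero_ne_zero
      have : g (PowerSeries.constantCoeff y) = 1 := by
        have := congrArg (PowerSeries.coeff (R := k) 0) hy1
        rw [hπdef, PowerSeries.coeff_map, PowerSeries.coeff_zero_eq_constantCoeff_apply] at this
        simpa using this
      rw [hg] at this
      rw [this]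
      exact one_ne_zero
    exact hJtop (J.eq_top_of_isUnit_mem hyJ hyu)
  obtain ⟨m, hIm⟩ := IsDiscreteValuationRing.ideal_eq_span_pow_irreducible hIbot
    PowerSeries.X_irreducible
  have hm : 1 ≤ m := by
    rcases Nat.eq_zero_or_pos m with h | h
    · exfalso
      apply hItop
      rw [hIm, h, pow_zero, Ideal.span_singleton_one]
    · exact h
  -- pick y ∈ J with π y = X ^ m
  have hXmI : (PowerSeries.X : PowerSeries k) ^ m ∈ I := by
    rw [hIm]; exact Ideal.mem_span_singleton_self _
  obtain ⟨y, hyJ, hym⟩ := Ideal.mem_image_of_mem_map_of_surjective π hπsurj hXmI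
  -- key: for every z ∈ J, π (φ z) ∈ (X^(p*m))
  have hkey : ∀ z ∈ J, π (φ z) ∈ Ideal.span {(PowerSeries.X : PowerSeries k) ^ (p * m)} := by
    intro z hz
    have hπz : π z ∈ I := Ideal.mem_map_of_mem π hz
    rw [hIm, Ideal.mem_span_singleton] at hπz
    obtain ⟨h, hh⟩ := hπz
    obtain ⟨H, rfl⟩ := hπsurj h
    have hker0 : π (z - PowerSeries.X ^ m * H) = 0 := by
      rw [map_sub, map_mul, map_pow, hπX, hh, sub_self]
    obtain ⟨G, hG⟩ := hπker _ hker0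
    have hzeq : z = PowerSeries.X ^ m * H + (p : PowerSeries (WittVector p k)) * G := by
      rw [← hG]; ring
    rw [hzeq, map_add, map_mul, map_mul, map_pow, hφu, map_natCast,
      map_add, map_mul, map_mul, map_pow, map_pow, hπX, hπp, zero_mul, add_zero]
    rw [Ideal.mem_span_singleton]
    exact ⟨π (φ H), by rw [← pow_mul]⟩
  -- apply to E^(i-1) * y
  have hEy := hJ y hyJ
  have hmem : π (E ^ (i - 1) * y) ∈ Ideal.span {(PowerSeries.X : PowerSeries k) ^ (p * m)} := by
    have hle : Ideal.map φ J ≤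
        Ideal.comap π (Ideal.span {(PowerSeries.X : PowerSeries k) ^ (p * m)}) := by
      rw [Ideal.map_le_iff_le_comap]
      intro z hz
      exact hkey z hz
    exact hle hEy
  rw [map_mul, map_pow, hπE, hym, ← pow_mul, ← pow_add, Ideal.mem_span_singleton] at hmem
  have hdvd := hmem
  rw [PowerSeries.X_pow_dvd_iff] at hdvd
  have hle : p * m ≤ e * (i - 1) + m := by
    by_contra hlt
    push_neg at hlt
    have := hdvd (e * (i - 1) + m) hlt
    rw [PowerSeries.coeff_X_pow, if_pos rfl] at this
    exact one_ne_zero this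
  -- numeric contradiction
  have hp2 : 2 ≤ p := (Fact.out : p.Prime).two_le
  have hpm : p * m = (p - 1) * m + m := by
    conv_lhs => rw [← Nat.succ_pred_eq_of_pos (by omega : 0 < p)]
    rw [Nat.succ_mul, Nat.pred_eq_sub_one]
  have h2 : p - 1 ≤ (p - 1) * m := Nat.le_mul_of_pos_right _ hm
  omega
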